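/- For all integers n ≥ 2 and all p ∈ [0,1], the maximal 1-independent connectivity function of the path P_n satisfies F_{1,P_n}(p) = p^{⌊n/2⌋}. -/

import Mathlib

open MeasureTheory ProbabilityTheory

namespace OneIndep

variable {V : Type*}

/-- The configuration space of a bond percolation model on `G`: each edge of `G` is
either open (`true`) or closed (`false`). A configuration is identified with the
spanning subgraph consisting of its open edges. -/
abbrev Config (G : SimpleGraph V) : Type _ := G.edgeSet → Bool

/-- The set of endpoints of edges belonging to an edge set `F`. -/
def endpointsOf (F : Set (Sym2 V)) : Set V := {v | ∃ e ∈ F, v ∈ e}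

/-- Two edge sets are `k`-distant in `G` if they are disjoint and every walk in `G` from an
endpoint of an edge of `F₁` to an endpoint of an edge of `F₂` has length at least `k`.
For `k = 1` this says precisely that `F₁` and `F₂` are disjoint and no edge of `F₁` shares
an endpoint with an edge of `F₂`. -/
def KDistant (G : SimpleGraph V) (k : ℕ) (F₁ F₂ : Set (Sym2 V)) : Prop :=
  Disjoint F₁ F₂ ∧
    ∀ u ∈ endpointsOf F₁, ∀ v ∈ endpointsOf F₂, ∀ w : G.Walk u v, k ≤ w.length

/-- The sub-σ-algebra of the configuration space generated by the states of the edges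
belonging to `F`. -/
def cylinderSigma (G : SimpleGraph V) (F : Set (Sym2 V)) : MeasurableSpace (Config G) :=
  MeasurableSpace.comap (fun ω (e : {e : G.edgeSet // (e : Sym2 V) ∈ F}) => ω e) inferInstance

/-- A measure on the configuration space of `G` is `k`-independent if the states of any two
`k`-distant edge sets are independent. -/
def KIndepMeasure (G : SimpleGraph V) (k : ℕ) (μ : Measure (Config G)) : Prop :=
  ∀ F₁ F₂ : Set (Sym2 V), F₁ ⊆ G.edgeSet → F₂ ⊆ G.edgeSet → KDistant G k F₁ F₂ →
    Indep (cylinderSigma G F₁) (cylinderSigma G F₂) μ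

/-- `MGe G k p` is the collection of `k`-independent bond percolation measures on `G` in which
every edge is open with probability at least `p`. -/
def MGe (G : SimpleGraph V) (k : ℕ) (p : ℝ) : Set (Measure (Config G)) :=
  {μ | IsProbabilityMeasure μ ∧ KIndepMeasure G k μ ∧
    ∀ e : G.edgeSet, ENNReal.ofReal p ≤ μ {ω | ω e = true}}

/-- `MLe G k p` is the collection of `k`-independent bond percolation measures on `G` in which
every edge is open with probability at most `p`. -/
def MLe (G : SimpleGraph V) (k : ℕ) (p : ℝ) : Set (Measure (Config G)) :=
  {μ | IsProbabilityMeasure μ ∧ KIndepMeasure G k μ ∧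
    ∀ e : G.edgeSet, μ {ω | ω e = true} ≤ ENNReal.ofReal p}

/-- The spanning subgraph of `G` consisting of the open edges of the configuration `ω`. -/
def openSubgraph (G : SimpleGraph V) (ω : Config G) : SimpleGraph V :=
  SimpleGraph.fromEdgeSet {e | ∃ h : e ∈ G.edgeSet, ω ⟨e, h⟩ = true}

/-- Percolation: the open subgraph contains an infinite connected component. -/
def Percolates (G : SimpleGraph V) (ω : Config G) : Prop :=
  ∃ v : V, {w | (openSubgraph G ω).Reachable v w}.Infinite

/-- The Harris critical probability for 1-independent percolation on `G`. -/
noncomputable def harrisCrit (G : SimpleGraph V) : ℝ :=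
  sInf {p | p ∈ Set.Icc (0:ℝ) 1 ∧ ∀ μ ∈ MGe G 1 p, μ {ω | Percolates G ω} = 1}

/-- The open subgraph contains a path of length `n`. -/
def HasOpenPathOfLength (G : SimpleGraph V) (ω : Config G) (n : ℕ) : Prop :=
  ∃ (u v : V) (w : (openSubgraph G ω).Walk u v), w.IsPath ∧ w.length = n

/-- The long paths critical probability for 1-independent percolation on `G`. -/
noncomputable def longPathsCrit (G : SimpleGraph V) : ℝ :=
  sInf {p | p ∈ Set.Icc (0:ℝ) 1 ∧
    ∀ μ ∈ MGe G 1 p, ∀ n : ℕ, 0 < μ {ω | HasOpenPathOfLength G ω n}}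

/-- The `k`-independent connectivity function `f_{k,G}(p)`: the infimum over all
`k`-independent measures with edge-probability at least `p` of the probability that the
random spanning subgraph is connected. -/
noncomputable def connFun (G : SimpleGraph V) (k : ℕ) (p : ℝ) : ℝ :=
  sInf {x | ∃ μ ∈ MGe G k p, x = (μ {ω | (openSubgraph G ω).Connected}).toReal}

/-- The maximal `k`-independent connectivity function `F_{k,G}(p)`: the supremum over all
`k`-independent measures with edge-probability at most `p` of the probability that the
random spanning subgraph is connected. -/
noncomputable def connFunMax (G : SimpleGraph V) (k : ℕ) (p : ℝ) : ℝ :=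
  sSup {x | ∃ μ ∈ MLe G k p, x = (μ {ω | (openSubgraph G ω).Connected}).toReal}

/-- The line lattice `ℤ`: the two-way infinite path. -/
def lineLattice : SimpleGraph ℤ := SimpleGraph.fromRel (fun x y => y = x + 1)

/-- The hypercubic lattice `ℤ^d`. -/
def hypercubicLattice (d : ℕ) : SimpleGraph (Fin d → ℤ) :=
  SimpleGraph.fromRel (fun x y => ∑ i, (x i - y i).natAbs = 1)

/-- The square lattice `ℤ²`. -/
def squareLattice : SimpleGraph (ℤ × ℤ) :=
  SimpleGraph.fromRel (fun x y => (x.1 - y.1).natAbs + (x.2 - y.2).natAbs = 1)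


section PathAux
def eMin {n : ℕ} : Sym2 (Fin n) → ℕ := Sym2.lift ⟨fun u v => min u.val v.val, fun u v => min_comm _ _⟩

lemma eMin_mk {n : ℕ} (u v : Fin n) : eMin s(u,v) = min u.val v.val := rfl

lemma edge_spec {n : ℕ} {e : Sym2 (Fin n)} (he : e ∈ (SimpleGraph.pathGraph n).edgeSet) :
    ∃ (h1 : eMin e + 1 < n), e = s(⟨eMin e, by omega⟩, ⟨eMin e + 1, h1⟩) := by
  induction e with
  | _ u v =>
    rw [SimpleGraph.mem_edgeSet, SimpleGraph.pathGraph_adj] at he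
    rcases he with h | h
    · have hm : eMin s(u,v) = u.val := by rw [eMin_mk]; omega
      refine ⟨by omega, ?_⟩
      have h1 : (⟨eMin s(u,v), by omega⟩ : Fin n) = u := Fin.ext (by simp [hm])
      have h2 : (⟨eMin s(u,v) + 1, by omega⟩ : Fin n) = v := Fin.ext (by simp [hm, h])
      rw [h1, h2]
    · have hm : eMin s(u,v) = v.val := by rw [eMin_mk]; omega
      refine ⟨by omega, ?_⟩
      have h1 : (⟨eMin s(u,v), by omega⟩ : Fin n) = v := Fin.ext (by simp [hm])
      have h2 : (⟨eMin s(u,v) + 1, by omega⟩ : Fin n) = u := Fin.ext (by simp [hm, h])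
      rw [h1, h2, Sym2.eq_swap]


variable {n : ℕ}



def blockIdx (e : (SimpleGraph.pathGraph n).edgeSet) : ℕ := eMin e.val / 2

lemma blockIdx_lt (e : (SimpleGraph.pathGraph n).edgeSet) : blockIdx e < n / 2 := by
  obtain ⟨h1, -⟩ := edge_spec e.prop
  unfold blockIdx; omega

def block (e : (SimpleGraph.pathGraph n).edgeSet) : Fin (n / 2) := ⟨blockIdx e, blockIdx_lt e⟩

lemma mem_edge_iff {e : Sym2 (Fin n)} (he : e ∈ (SimpleGraph.pathGraph n).edgeSet) (x : Fin n) :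
    x ∈ e ↔ (x.val = eMin e ∨ x.val = eMin e + 1) := by
  obtain ⟨h1, he2⟩ := edge_spec he
  conv_lhs => rw [he2]
  rw [Sym2.mem_iff]
  constructor
  · rintro (rfl | rfl) <;> simp
  · rintro (h | h)
    · left; exact Fin.ext h
    · right; exact Fin.ext h

lemma block_shared {e₁ e₂ : (SimpleGraph.pathGraph n).edgeSet} (h : block e₁ = block e₂) :
    ∃ x : Fin n, x ∈ e₁.val ∧ x ∈ e₂.val := by
  have h' : blockIdx e₁ = blockIdx e₂ := congrArg Fin.val h
  obtain ⟨hb1, -⟩ := edge_spec e₁.prop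
  obtain ⟨hb2, -⟩ := edge_spec e₂.prop
  unfold blockIdx at h'
  set a := eMin e₁.val with ha
  set b := eMin e₂.val with hb
  have hcase : (a = b) ∨ (a = b + 1) ∨ (b = a + 1) := by omega
  rcases hcase with hc | hc | hc
  · exact ⟨⟨a, by omega⟩, (mem_edge_iff e₁.prop _).mpr (Or.inl rfl),
      (mem_edge_iff e₂.prop _).mpr (Or.inl (show a = b by omega))⟩
  · exact ⟨⟨a, by omega⟩, (mem_edge_iff e₁.prop _).mpr (Or.inl rfl),
      (mem_edge_iff e₂.prop _).mpr (Or.inr (show a = b + 1 by omega))⟩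
  · exact ⟨⟨b, by omega⟩, (mem_edge_iff e₁.prop _).mpr (Or.inr (show b = a + 1 by omega)),
      (mem_edge_iff e₂.prop _).mpr (Or.inl (show b = b by omega))⟩

def pairEdge (k : Fin (n / 2)) : (SimpleGraph.pathGraph n).edgeSet :=
  ⟨s(⟨2 * k.val, by omega⟩, ⟨2 * k.val + 1, by omega⟩), by
    rw [SimpleGraph.mem_edgeSet, SimpleGraph.pathGraph_adj]; left; rfl⟩

lemma eMin_pairEdge (k : Fin (n / 2)) : eMin (pairEdge k).val = 2 * k.val := by
  show eMin s(_, _) = _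
  rw [eMin_mk]; simp

lemma block_pairEdge (k : Fin (n / 2)) : block (pairEdge k) = k := by
  apply Fin.ext
  show blockIdx _ = _
  unfold blockIdx
  rw [eMin_pairEdge]; omega

lemma openSubgraph_adj {ω : Config (SimpleGraph.pathGraph n)} {u v : Fin n} :
    (openSubgraph (SimpleGraph.pathGraph n) ω).Adj u v ↔
      (∃ h : s(u,v) ∈ (SimpleGraph.pathGraph n).edgeSet, ω ⟨s(u,v), h⟩ = true) ∧ u ≠ v := by
  rw [openSubgraph, SimpleGraph.fromEdgeSet_adj]; rfl

lemma connected_iff (hn : 2 ≤ n) (ω : Config (SimpleGraph.pathGraph n)) :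
    (openSubgraph (SimpleGraph.pathGraph n) ω).Connected ↔ ∀ e, ω e = true := by
  constructor
  · intro hc
    by_contra hne
    push_neg at hne
    obtain ⟨e, he⟩ := hne
    rw [Ne, Bool.not_eq_true] at he
    obtain ⟨h1, hespec⟩ := edge_spec e.prop
    set a := eMin e.val with ha
    -- invariant: adjacency preserves the predicate (· ≤ a)
    have key : ∀ u v : Fin n, (openSubgraph (SimpleGraph.pathGraph n) ω).Adj u v →
        (u.val ≤ a ↔ v.val ≤ a) := by
      intro u v huv
      rw [openSubgraph_adj] at huv
      obtain ⟨⟨hmem, hopen⟩, hne'⟩ := huv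
      by_contra hiff
      -- then {u,v} = {a, a+1} and the edge equals e
      have hadj : u.val + 1 = v.val ∨ v.val + 1 = u.val := by
        rw [SimpleGraph.mem_edgeSet, SimpleGraph.pathGraph_adj] at hmem
        exact hmem
      have heq : s(u, v) = e.val := by
        rcases hadj with h' | h'
        · have hu : u.val = a ∧ v.val = a + 1 := by omega
          rw [hespec]
          congr 1
          exacts [Fin.ext hu.1, Fin.ext hu.2]
        · have hu : v.val = a ∧ u.val = a + 1 := by omega
          rw [show s(u, v) = s(v, u) from Sym2.eq_swap, hespec]
          congr 1
          exacts [Fin.ext hu.1, Fin.ext hu.2]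
      have : ω e = true := by
        have : (⟨s(u,v), hmem⟩ : (SimpleGraph.pathGraph n).edgeSet) = e := Subtype.ext heq
        rw [← this]; exact hopen
      simp [this] at he
    have reach_iff : ∀ u v : Fin n, (openSubgraph (SimpleGraph.pathGraph n) ω).Reachable u v →
        (u.val ≤ a ↔ v.val ≤ a) := by
      intro u v hr
      obtain ⟨w⟩ := hr
      induction w with
      | nil => rfl
      | cons hadj _ ih => exact (key _ _ hadj).trans ih
    have := reach_iff ⟨a, by omega⟩ ⟨a + 1, h1⟩ (hc.preconnected _ _)
    simp at this
  · intro hall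
    have hedge : {e | ∃ h : e ∈ (SimpleGraph.pathGraph n).edgeSet, ω ⟨e, h⟩ = true} =
        (SimpleGraph.pathGraph n).edgeSet := by
      ext e; simp only [Set.mem_setOf_eq]
      exact ⟨fun ⟨h, _⟩ => h, fun h => ⟨h, hall _⟩⟩
    rw [openSubgraph, hedge, SimpleGraph.fromEdgeSet_edgeSet]
    obtain ⟨k, rfl⟩ : ∃ k, n = k + 1 := ⟨n - 1, by omega⟩
    exact SimpleGraph.pathGraph_connected k

lemma measurableSet_fn {ι : Type*} [Finite ι] (s : Set (ι → Bool)) : MeasurableSet s := by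
  have h1 : ∀ f : ι → Bool, MeasurableSet ({f} : Set (ι → Bool)) := by
    intro f
    have : ({f} : Set (ι → Bool)) = Set.pi Set.univ (fun i => {f i}) := by
      ext g; simp [funext_iff, Set.mem_pi, eq_comm]
    rw [this]
    exact MeasurableSet.univ_pi fun i => measurableSet_singleton _
  have h2 : s = ⋃ f ∈ s, {f} := by simp
  rw [h2]
  exact MeasurableSet.biUnion (Set.to_countable s) (fun f _ => h1 f)

lemma measurable_fn {κ ι : Type*} [Finite κ] (f : (κ → Bool) → (ι → Bool)) : Measurable f :=
  measurable_pi_iff.mpr fun _ => fun _ _ => measurableSet_fn _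

lemma mem_pairEdge_iff {k : Fin (n / 2)} (x : Fin n) :
    x ∈ (pairEdge k).val ↔ (x.val = 2 * k.val ∨ x.val = 2 * k.val + 1) := by
  rw [mem_edge_iff (pairEdge k).prop, eMin_pairEdge]

lemma upper_aux (μ : Measure (Config (SimpleGraph.pathGraph n)))
    [IsProbabilityMeasure μ] (hind : KIndepMeasure (SimpleGraph.pathGraph n) 1 μ) (q : ENNReal)
    (hmarg : ∀ e, μ {ω | ω e = true} ≤ q) (s : Finset (Fin (n / 2))) :
    μ {ω | ∀ k ∈ s, ω (pairEdge k) = true} ≤ q ^ s.card := by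
  classical
  induction s using Finset.induction_on with
  | empty => simp
  | @insert a s ha ih =>
    set F₁ : Set (Sym2 (Fin n)) := {(pairEdge a).val} with hF₁
    set F₂ : Set (Sym2 (Fin n)) := {x | ∃ k ∈ s, (pairEdge k).val = x} with hF₂
    have hsub₁ : F₁ ⊆ (SimpleGraph.pathGraph n).edgeSet := by
      rintro x rfl; exact (pairEdge a).prop
    have hsub₂ : F₂ ⊆ (SimpleGraph.pathGraph n).edgeSet := by
      rintro x ⟨k, _, rfl⟩; exact (pairEdge k).prop
    -- endpoints
    have hend₁ : ∀ u ∈ endpointsOf F₁, u.val = 2 * a.val ∨ u.val = 2 * a.val + 1 := by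
      rintro u ⟨e, rfl, hu⟩; exact (mem_pairEdge_iff u).mp hu
    have hend₂ : ∀ v ∈ endpointsOf F₂,
        ∃ k ∈ s, v.val = 2 * k.val ∨ v.val = 2 * k.val + 1 := by
      rintro v ⟨e, ⟨k, hk, rfl⟩, hv⟩; exact ⟨k, hk, (mem_pairEdge_iff v).mp hv⟩
    have hdist : KDistant (SimpleGraph.pathGraph n) 1 F₁ F₂ := by
      constructor
      · rw [Set.disjoint_left]
        rintro x rfl ⟨k, hk, hx⟩
        have hka : k.val ≠ a.val := fun h => ha (by rwa [show k = a from Fin.ext h] at hk)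
        have h2a : (⟨2 * a.val, by omega⟩ : Fin n) ∈ (pairEdge a).val :=
          (mem_pairEdge_iff _).mpr (Or.inl rfl)
        rw [← hx] at h2a
        have := (mem_pairEdge_iff _).mp h2a
        simp only [] at this
        omega
      · rintro u hu v hv w
        obtain hu' := hend₁ u hu
        obtain ⟨k, hk, hv'⟩ := hend₂ v hv
        have hka : k.val ≠ a.val := fun h => ha (by rwa [show k = a from Fin.ext h] at hk)
        by_contra hlen
        have : w.length = 0 := by omega
        have huv : u = v := SimpleGraph.Walk.eq_of_length_eq_zero this
        rw [huv] at hu'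
        omega
    have hI := hind F₁ F₂ hsub₁ hsub₂ hdist
    rw [Indep_iff] at hI
    have hmemA : ((pairEdge a).val : Sym2 (Fin n)) ∈ F₁ := rfl
    set A : Set (Config (SimpleGraph.pathGraph n)) := {ω | ω (pairEdge a) = true} with hA
    set B : Set (Config (SimpleGraph.pathGraph n)) := {ω | ∀ k ∈ s, ω (pairEdge k) = true} with hB
    have hmA : MeasurableSet[cylinderSigma (SimpleGraph.pathGraph n) F₁] A := by
      rw [cylinderSigma, MeasurableSpace.measurableSet_comap]
      exact ⟨{f | f ⟨pairEdge a, hmemA⟩ = true}, measurableSet_fn _, rfl⟩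
    have hmB : MeasurableSet[cylinderSigma (SimpleGraph.pathGraph n) F₂] B := by
      rw [cylinderSigma, MeasurableSpace.measurableSet_comap]
      exact ⟨{f | ∀ k (hk : k ∈ s), f ⟨pairEdge k, ⟨k, hk, rfl⟩⟩ = true}, measurableSet_fn _, rfl⟩
    have hkey := hI A B hmA hmB
    have hev : {ω : Config (SimpleGraph.pathGraph n) | ∀ k ∈ insert a s, ω (pairEdge k) = true}
        = A ∩ B := by
      ext ω; simp [hA, hB, Finset.forall_mem_insert]
    rw [hev, hkey, Finset.card_insert_of_notMem ha, pow_succ]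
    calc μ A * μ B ≤ q * q ^ s.card := mul_le_mul' (hmarg _) ih
    _ = q ^ s.card * q := mul_comm _ _

section PiMeasure
variable {m : ℕ} (β : Measure Bool) [IsProbabilityMeasure β]

lemma pi_eval (i : Fin m) (t : Set Bool) :
    (Measure.pi fun _ => β) ((fun Y : Fin m → Bool => Y i) ⁻¹' t) = β t := by
  classical
  have hset : (fun Y : Fin m → Bool => Y i) ⁻¹' t
      = Set.pi Set.univ (fun j => if j = i then t else Set.univ) := by
    ext Y
    simp only [Set.mem_preimage, Set.mem_pi, Set.mem_univ, true_implies]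
    constructor
    · intro h j
      by_cases hj : j = i <;> simp [hj, h]
    · intro h
      have := h i
      simpa using this
  rw [hset, Measure.pi_pi]
  rw [Finset.prod_eq_single i (fun j _ hj => by rw [if_neg hj]; exact measure_univ) (by simp)]
  simp

lemma iIndepFun_eval :
    iIndepFun
      (fun i (Y : Fin m → Bool) => Y i) (Measure.pi fun _ => β) := by
  classical
  rw [iIndepFun_iff]
  intro s f' hf'
  have hex : ∀ i ∈ s, ∃ t : Set Bool, (fun Y : Fin m → Bool => Y i) ⁻¹' t = f' i := by
    intro i hi
    obtain ⟨t, -, ht⟩ := MeasurableSpace.measurableSet_comap.mp (hf' i hi)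
    exact ⟨t, ht⟩
  choose! t ht using hex
  have hpi : (⋂ i ∈ s, f' i) = Set.pi Set.univ (fun i => if i ∈ s then t i else Set.univ) := by
    ext Y
    simp only [Set.mem_iInter, Set.mem_pi, Set.mem_univ, true_implies]
    refine forall_congr' fun i => ?_
    by_cases hi : i ∈ s
    · simp only [hi, if_true, true_implies]
      rw [← ht i hi]; rfl
    · simp [hi]
  rw [hpi, Measure.pi_pi]
  have hL : ∀ i : Fin m, β (if i ∈ s then t i else Set.univ) = if i ∈ s then β (t i) else 1 := by
    intro i; by_cases hi : i ∈ s
    · rw [if_pos hi, if_pos hi]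
    · rw [if_neg hi, if_neg hi]; exact measure_univ
  have hR : ∀ i ∈ s, (Measure.pi fun _ : Fin m => β) (f' i) = β (t i) := by
    intro i hi; rw [← ht i hi, pi_eval]
  rw [Finset.prod_congr rfl (fun i hi => hR i hi)]
  calc ∏ i : Fin m, β (if i ∈ s then t i else Set.univ)
      = ∏ i : Fin m, (if i ∈ s then β (t i) else 1) := Finset.prod_congr rfl fun i _ => hL i
    _ = ∏ i ∈ Finset.univ ∩ s, β (t i) := Finset.prod_ite_mem _ _ _
    _ = ∏ i ∈ s, β (t i) := by rw [Finset.univ_inter]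

end PiMeasure

section Construction

/-- The coupling map: `Y` gives the state of each block; an edge is open iff its block is on. -/
def phi (Y : Fin (n / 2) → Bool) : Config (SimpleGraph.pathGraph n) := fun e => Y (block e)

lemma measurable_phi : Measurable (phi (n := n)) := measurable_fn _

lemma bern_le (q : ENNReal) (hq : q ≤ 1) : q.toNNReal ≤ 1 := by
  simpa using ENNReal.toNNReal_mono ENNReal.one_ne_top hq

noncomputable def nu (q : ENNReal) (hq : q ≤ 1) : Measure (Fin (n / 2) → Bool) :=
  Measure.pi fun _ => (PMF.bernoulli q.toNNReal (bern_le q hq)).toMeasure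

noncomputable def mu0 (q : ENNReal) (hq : q ≤ 1) : Measure (Config (SimpleGraph.pathGraph n)) :=
  (nu (n := n) q hq).map (phi (n := n))

variable (q : ENNReal) (hq : q ≤ 1)

instance : IsProbabilityMeasure ((PMF.bernoulli q.toNNReal (bern_le q hq)).toMeasure) := PMF.toMeasure.isProbabilityMeasure _

instance : IsProbabilityMeasure (nu (n := n) q hq) := by
  rw [nu]; infer_instance

instance : IsProbabilityMeasure (mu0 (n := n) q hq) :=
  Measure.isProbabilityMeasure_map (measurable_phi).aemeasurable

lemma bernoulli_true : (PMF.bernoulli q.toNNReal (bern_le q hq)).toMeasure {true} = q := by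
  rw [PMF.toMeasure_apply_singleton _ _ (measurableSet_singleton _)]
  simp [PMF.bernoulli_apply, ENNReal.coe_toNNReal (ne_top_of_le_ne_top ENNReal.one_ne_top hq)]

lemma mu0_apply (A : Set (Config (SimpleGraph.pathGraph n))) :
    mu0 (n := n) q hq A = nu (n := n) q hq (phi ⁻¹' A) :=
  Measure.map_apply measurable_phi (measurableSet_fn A)

lemma mu0_marginal (e : (SimpleGraph.pathGraph n).edgeSet) :
    mu0 (n := n) q hq {ω | ω e = true} = q := by
  rw [mu0_apply]
  have : phi (n := n) ⁻¹' {ω | ω e = true} = (fun Y : Fin (n/2) → Bool => Y (block e)) ⁻¹' {true} := by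
    ext Y; simp [phi]
  rw [this, nu, pi_eval, bernoulli_true q hq]

lemma mu0_conn (hn : 2 ≤ n) :
    mu0 (n := n) q hq {ω | (openSubgraph (SimpleGraph.pathGraph n) ω).Connected} = q ^ (n / 2) := by
  rw [mu0_apply]
  have hpre : phi (n := n) ⁻¹' {ω | (openSubgraph (SimpleGraph.pathGraph n) ω).Connected}
      = Set.pi Set.univ (fun _ : Fin (n/2) => ({true} : Set Bool)) := by
    ext Y
    simp only [Set.mem_preimage, Set.mem_setOf_eq, Set.mem_pi, Set.mem_univ, true_implies,
      Set.mem_singleton_iff]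
    rw [connected_iff hn]
    constructor
    · intro h k
      have := h (pairEdge k)
      rwa [phi, block_pairEdge] at this
    · intro h e
      exact h (block e)
  rw [hpre, nu, Measure.pi_pi]
  simp [bernoulli_true q hq]

lemma mu0_kindep : KIndepMeasure (SimpleGraph.pathGraph n) 1 (mu0 (n := n) q hq) := by
  classical
  intro F₁ F₂ hsub₁ hsub₂ hdist
  rw [Indep_iff]
  intro t₁ t₂ h₁ h₂
  unfold cylinderSigma at h₁ h₂
  obtain ⟨u₁, -, hu₁⟩ := MeasurableSpace.measurableSet_comap.mp h₁
  obtain ⟨u₂, -, hu₂⟩ := MeasurableSpace.measurableSet_comap.mp h₂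
  set S₁ : Finset (Fin (n/2)) := Finset.univ.filter
    (fun k => ∃ e : (SimpleGraph.pathGraph n).edgeSet, e.val ∈ F₁ ∧ block e = k) with hS₁
  set S₂ : Finset (Fin (n/2)) := Finset.univ.filter
    (fun k => ∃ e : (SimpleGraph.pathGraph n).edgeSet, e.val ∈ F₂ ∧ block e = k) with hS₂
  have hdisj : Disjoint S₁ S₂ := by
    rw [Finset.disjoint_left]
    intro k hk₁ hk₂
    rw [hS₁, Finset.mem_filter] at hk₁
    rw [hS₂, Finset.mem_filter] at hk₂
    obtain ⟨-, e₁, he₁, hb₁⟩ := hk₁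
    obtain ⟨-, e₂, he₂, hb₂⟩ := hk₂
    obtain ⟨x, hx₁, hx₂⟩ := block_shared (hb₁.trans hb₂.symm)
    have := hdist.2 x ⟨e₁.val, he₁, hx₁⟩ x ⟨e₂.val, he₂, hx₂⟩ SimpleGraph.Walk.nil
    simp at this
  have hIF := (iIndepFun_eval ((PMF.bernoulli q.toNNReal (bern_le q hq)).toMeasure)).indepFun_finset S₁ S₂ hdisj
    (fun i => measurable_pi_apply i)
  -- transfer measurability
  set ψ₁ : ({i // i ∈ S₁} → Bool) → ({e : (SimpleGraph.pathGraph n).edgeSet //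
      (e : Sym2 (Fin n)) ∈ F₁} → Bool) :=
    fun g e => g ⟨block e.1, by rw [hS₁, Finset.mem_filter]; exact ⟨Finset.mem_univ _, e.1, e.2, rfl⟩⟩
  set ψ₂ : ({i // i ∈ S₂} → Bool) → ({e : (SimpleGraph.pathGraph n).edgeSet //
      (e : Sym2 (Fin n)) ∈ F₂} → Bool) :=
    fun g e => g ⟨block e.1, by rw [hS₂, Finset.mem_filter]; exact ⟨Finset.mem_univ _, e.1, e.2, rfl⟩⟩
  have hpre₁ : phi (n := n) ⁻¹' t₁ = (fun Y (i : {i // i ∈ S₁}) => Y i.val) ⁻¹' (ψ₁ ⁻¹' u₁) := by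
    rw [← hu₁]; rfl
  have hpre₂ : phi (n := n) ⁻¹' t₂ = (fun Y (i : {i // i ∈ S₂}) => Y i.val) ⁻¹' (ψ₂ ⁻¹' u₂) := by
    rw [← hu₂]; rfl
  have hm₁ : MeasurableSet[MeasurableSpace.comap (fun Y (i : {i // i ∈ S₁}) => Y i.val)
      inferInstance] (phi (n := n) ⁻¹' t₁) :=
    ⟨ψ₁ ⁻¹' u₁, measurableSet_fn _, hpre₁.symm⟩
  have hm₂ : MeasurableSet[MeasurableSpace.comap (fun Y (i : {i // i ∈ S₂}) => Y i.val)
      inferInstance] (phi (n := n) ⁻¹' t₂) :=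
    ⟨ψ₂ ⁻¹' u₂, measurableSet_fn _, hpre₂.symm⟩
  have hkey := hIF.meas_inter hm₁ hm₂
  rw [mu0_apply, mu0_apply, mu0_apply, Set.preimage_inter]
  exact hkey
end Construction

end PathAux

theorem connFunMax_pathGraph (n : ℕ) (hn : 2 ≤ n) (p : ℝ) (hp : p ∈ Set.Icc (0:ℝ) 1) :
    connFunMax (SimpleGraph.pathGraph n) 1 p = p ^ (n / 2) := by
  classical
  set q := ENNReal.ofReal p with hqdef
  have hq1 : q ≤ 1 := ENNReal.ofReal_le_one.mpr hp.2
  have hqt : q ≠ ⊤ := ENNReal.ofReal_ne_top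
  set Conn : Set (Config (SimpleGraph.pathGraph n)) :=
    {ω | (openSubgraph (SimpleGraph.pathGraph n) ω).Connected} with hConn
  set X : Set ℝ := {x | ∃ μ ∈ MLe (SimpleGraph.pathGraph n) 1 p, x = (μ Conn).toReal} with hX
  have hub : ∀ x ∈ X, x ≤ p ^ (n / 2) := by
    rintro x ⟨μ, ⟨hprob, hind, hmarg⟩, rfl⟩
    haveI := hprob
    have hsub : Conn ⊆ {ω | ∀ k ∈ (Finset.univ : Finset (Fin (n/2))), ω (pairEdge k) = true} := by
      intro ω hω k _
      exact (connected_iff hn ω).mp hω (pairEdge k)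
    have hle : μ Conn ≤ q ^ (n / 2) := by
      calc μ Conn ≤ μ {ω | ∀ k ∈ (Finset.univ : Finset (Fin (n/2))), ω (pairEdge k) = true} :=
            measure_mono hsub
        _ ≤ q ^ (Finset.univ : Finset (Fin (n/2))).card := upper_aux μ hind q hmarg _
        _ = q ^ (n / 2) := by rw [Finset.card_univ, Fintype.card_fin]
    have := ENNReal.toReal_mono (ENNReal.pow_ne_top hqt) hle
    rwa [ENNReal.toReal_pow, ENNReal.toReal_ofReal hp.1] at this
  have hmem : p ^ (n / 2) ∈ X := by
    refine ⟨mu0 q hq1, ⟨inferInstance, mu0_kindep q hq1, fun e => le_of_eq (mu0_marginal q hq1 e)⟩, ?_⟩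
    rw [hConn, mu0_conn q hq1 hn, ENNReal.toReal_pow, ENNReal.toReal_ofReal hp.1]
  rw [connFunMax]
  exact le_antisymm (csSup_le ⟨_, hmem⟩ hub) (le_csSup ⟨_, hub⟩ hmem)

end OneIndep
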